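/- For every k ≥ 1 and every (z*,w*) in the extended solution set S_e, the PMM iterates satisfy the Fejér-type inequality ‖(z_k,w_k)−(z*,w*)‖² ≤ ‖(z_{k-1},w_{k-1})−(z*,w*)‖² − ρ_k(2−ρ_k)γ_k²‖(Mu_k+Cv_k−d, λ(w_{k-1}−Mu_k))‖². -/

import Mathlib

open scoped RealInnerProductSpace

noncomputable section

/-- `w` is a subgradient of the extended-real-valued function `φ` at `x`. -/
def HasSubgrad {E : Type*} [NormedAddCommGroup E] [InnerProductSpace ℝ E]
    (φ : E → EReal) (w x : E) : Prop :=
  ∀ x' : E, φ x + ((⟪w, x' - x⟫ : ℝ) : EReal) ≤ φ x'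

/-- `w` is an `ε`-subgradient of `φ` at `x`. -/
def HasESubgrad {E : Type*} [NormedAddCommGroup E] [InnerProductSpace ℝ E]
    (φ : E → EReal) (ε : ℝ) (w x : E) : Prop :=
  ∀ x' : E, φ x + ((⟪w, x' - x⟫ : ℝ) : EReal) - (ε : EReal) ≤ φ x'

/-- Convexity for an extended-real-valued function. -/
def ConvexE {E : Type*} [NormedAddCommGroup E] [InnerProductSpace ℝ E]
    (φ : E → EReal) : Prop :=
  ∀ x y : E, ∀ a b : ℝ, 0 ≤ a → 0 ≤ b → a + b = 1 →
    φ (a • x + b • y) ≤ (a : EReal) * φ x + (b : EReal) * φ y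

/-- Proper closed convex function with values in `(-∞, ∞]`. -/
def IsPCC {E : Type*} [NormedAddCommGroup E] [InnerProductSpace ℝ E]
    (φ : E → EReal) : Prop :=
  (∀ x, φ x ≠ ⊥) ∧ (∃ x, φ x ≠ ⊤) ∧ LowerSemicontinuous φ ∧ ConvexE φ

/-- Fenchel conjugate. -/
def fconj {E : Type*} [NormedAddCommGroup E] [InnerProductSpace ℝ E]
    (φ : E → EReal) (w : E) : EReal :=
  ⨆ x : E, ((⟪w, x⟫ : ℝ) : EReal) - φ x

/-- Lagrangian of `min { f u + g v : M u + C v = d }`. -/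
def Lag {E₁ E₂ F : Type*} [NormedAddCommGroup E₁] [InnerProductSpace ℝ E₁]
    [NormedAddCommGroup E₂] [InnerProductSpace ℝ E₂]
    [NormedAddCommGroup F] [InnerProductSpace ℝ F]
    (f : E₁ → EReal) (g : E₂ → EReal) (M : E₁ →ₗ[ℝ] F) (C : E₂ →ₗ[ℝ] F) (d : F)
    (u : E₁) (v : E₂) (z : F) : EReal :=
  f u + g v + ((⟪M u + C v - d, z⟫ : ℝ) : EReal)

/-- Saddle point of the Lagrangian. -/
def IsSaddle {E₁ E₂ F : Type*} [NormedAddCommGroup E₁] [InnerProductSpace ℝ E₁]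
    [NormedAddCommGroup E₂] [InnerProductSpace ℝ E₂]
    [NormedAddCommGroup F] [InnerProductSpace ℝ F]
    (f : E₁ → EReal) (g : E₂ → EReal) (M : E₁ →ₗ[ℝ] F) (C : E₂ →ₗ[ℝ] F) (d : F)
    (us : E₁) (vs : E₂) (zs : F) : Prop :=
  Lag f g M C d us vs zs ≠ ⊤ ∧ Lag f g M C d us vs zs ≠ ⊥ ∧
  (∀ u v, Lag f g M C d us vs zs ≤ Lag f g M C d u v zs) ∧
  (∀ ζ, Lag f g M C d us vs ζ ≤ Lag f g M C d us vs zs)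

/-- `h₁(z) = f*(-M* z)`. -/
def hOne {E₁ F : Type*} [NormedAddCommGroup E₁] [InnerProductSpace ℝ E₁]
    [FiniteDimensional ℝ E₁] [NormedAddCommGroup F] [InnerProductSpace ℝ F]
    [FiniteDimensional ℝ F] (f : E₁ → EReal) (M : E₁ →ₗ[ℝ] F) (z : F) : EReal :=
  fconj f (-(LinearMap.adjoint M z))

/-- `h₂(z) = g*(-C* z) + ⟪d, z⟫`. -/
def hTwo {E₂ F : Type*} [NormedAddCommGroup E₂] [InnerProductSpace ℝ E₂]
    [FiniteDimensional ℝ E₂] [NormedAddCommGroup F] [InnerProductSpace ℝ F]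
    [FiniteDimensional ℝ F] (g : E₂ → EReal) (C : E₂ →ₗ[ℝ] F) (d : F) (z : F) : EReal :=
  fconj g (-(LinearMap.adjoint C z)) + ((⟪d, z⟫ : ℝ) : EReal)

/-- The extended solution set `S_e(∂h₁, ∂h₂)`. -/
def extSolSet {E₁ E₂ F : Type*} [NormedAddCommGroup E₁] [InnerProductSpace ℝ E₁]
    [FiniteDimensional ℝ E₁] [NormedAddCommGroup E₂] [InnerProductSpace ℝ E₂]
    [FiniteDimensional ℝ E₂] [NormedAddCommGroup F] [InnerProductSpace ℝ F]
    [FiniteDimensional ℝ F]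
    (f : E₁ → EReal) (g : E₂ → EReal) (M : E₁ →ₗ[ℝ] F) (C : E₂ →ₗ[ℝ] F) (d : F) :
    Set (F × F) :=
  {p | HasSubgrad (hOne f M) (-p.2) p.1 ∧ HasSubgrad (hTwo g C d) p.2 p.1}

/-- Finiteness of `φ` at a minimizer of `φ` plus a real-valued function. -/
lemma finite_of_min' {E : Type*} [NormedAddCommGroup E] [InnerProductSpace ℝ E]
    (φ : E → EReal) (hbot : ∀ x, φ x ≠ ⊥) (hproper : ∃ x, φ x ≠ ⊤)
    (Q : E → ℝ) (v0 : E)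
    (hmin : ∀ v', φ v0 + ((Q v0 : ℝ) : EReal) ≤ φ v' + ((Q v' : ℝ) : EReal)) :
    ∃ r : ℝ, φ v0 = (r : EReal) := by
  obtain ⟨v1, hv1⟩ := hproper
  have hv1b := hbot v1
  have h1 : φ v1 = ((φ v1).toReal : EReal) := (EReal.coe_toReal hv1 hv1b).symm
  have hne : φ v0 ≠ ⊤ := by
    intro hT
    have := hmin v1
    rw [hT, h1] at this
    rw [EReal.top_add_coe] at this
    rw [← EReal.coe_add] at this
    exact (EReal.coe_ne_top _) (top_le_iff.mp this)
  exact ⟨(φ v0).toReal, (EReal.coe_toReal hne (hbot v0)).symm⟩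

/-- Subgradient inequality for a minimizer of `φ` plus a quadratic. -/
lemma subgrad_of_min' {E F : Type*} [NormedAddCommGroup E] [InnerProductSpace ℝ E]
    [NormedAddCommGroup F] [InnerProductSpace ℝ F]
    (φ : E → EReal) (hconv : ConvexE φ) (hbot : ∀ x, φ x ≠ ⊥)
    (L : E →ₗ[ℝ] F) (s dd : F) (lam : ℝ) (hlam : 0 < lam) (v0 : E) (r0 : ℝ)
    (hr0 : φ v0 = (r0 : EReal))
    (hmin : ∀ v', φ v0 + ((⟪s, L v0 - dd⟫ + lam / 2 * ‖L v0 - dd‖ ^ 2 : ℝ) : EReal) ≤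
        φ v' + ((⟪s, L v' - dd⟫ + lam / 2 * ‖L v' - dd‖ ^ 2 : ℝ) : EReal)) :
    ∀ v', ((r0 + ⟪s + lam • (L v0 - dd), L v0 - L v'⟫ : ℝ) : EReal) ≤ φ v' := by
  intro v'
  by_cases hT : φ v' = ⊤
  · rw [hT]; exact le_top
  have hr' : φ v' = (((φ v').toReal : ℝ) : EReal) := (EReal.coe_toReal hT (hbot v')).symm
  set r' : ℝ := (φ v').toReal with hr'def
  rw [hr', EReal.coe_le_coe_iff]
  set Δ : F := L v' - L v0 with hΔ
  have hkey : ∀ t : ℝ, 0 < t → t ≤ 1 →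
      r0 ≤ r' + ⟪s + lam • (L v0 - dd), Δ⟫ + lam * t / 2 * ‖Δ‖ ^ 2 := by
    intro t ht ht1
    have hconvt := hconv v0 v' (1 - t) t (by linarith) (le_of_lt ht) (by ring)
    rw [hr0, hr'] at hconvt
    rw [← EReal.coe_mul, ← EReal.coe_mul, ← EReal.coe_add] at hconvt
    have hmint := hmin ((1 - t) • v0 + t • v')
    rw [hr0] at hmint
    have hle : φ ((1 - t) • v0 + t • v') +
        ((⟪s, L ((1 - t) • v0 + t • v') - dd⟫ +
          lam / 2 * ‖L ((1 - t) • v0 + t • v') - dd‖ ^ 2 : ℝ) : EReal) ≤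
        (((1 - t) * r0 + t * r' : ℝ) : EReal) +
        ((⟪s, L ((1 - t) • v0 + t • v') - dd⟫ +
          lam / 2 * ‖L ((1 - t) • v0 + t • v') - dd‖ ^ 2 : ℝ) : EReal) :=
      add_le_add_left hconvt _
    have htot := le_trans hmint hle
    rw [← EReal.coe_add, ← EReal.coe_add, EReal.coe_le_coe_iff] at htot
    have hLt : L ((1 - t) • v0 + t • v') - dd = (L v0 - dd) + t • Δ := by
      simp only [map_add, map_smul, hΔ]
      module
    rw [hLt] at htot
    have hnorm : ‖(L v0 - dd) + t • Δ‖ ^ 2 =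
        ‖L v0 - dd‖ ^ 2 + 2 * (t * ⟪L v0 - dd, Δ⟫) + t ^ 2 * ‖Δ‖ ^ 2 := by
      rw [@norm_add_sq_real, real_inner_smul_right, norm_smul]
      simp [abs_of_pos ht]
      ring
    rw [hnorm, inner_add_right, real_inner_smul_right] at htot
    have hident : ⟪s + lam • (L v0 - dd), Δ⟫ = ⟪s, Δ⟫ + lam * ⟪L v0 - dd, Δ⟫ := by
      rw [inner_add_left, real_inner_smul_left]
    rw [hident]
    nlinarith [htot, ht]
  have h0 : ∀ ε : ℝ, 0 < ε → r0 ≤ r' + ⟪s + lam • (L v0 - dd), Δ⟫ + ε := by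
    intro ε hε
    set c : ℝ := lam / 2 * ‖Δ‖ ^ 2 with hc
    have hc0 : 0 ≤ c := by positivity
    set t : ℝ := min 1 (ε / (c + 1)) with htdef
    have ht : 0 < t := lt_min one_pos (by positivity)
    have ht1 : t ≤ 1 := min_le_left _ _
    have := hkey t ht ht1
    have hct : lam * t / 2 * ‖Δ‖ ^ 2 ≤ ε := by
      have h2 : t ≤ ε / (c + 1) := min_le_right _ _
      have heq : lam * t / 2 * ‖Δ‖ ^ 2 = c * t := by rw [hc]; ring
      rw [heq]
      calc c * t ≤ c * (ε / (c + 1)) := mul_le_mul_of_nonneg_left h2 hc0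
        _ ≤ (c + 1) * (ε / (c + 1)) :=
            mul_le_mul_of_nonneg_right (by linarith) (by positivity)
        _ = ε := by field_simp
    linarith
  have hfin : r0 ≤ r' + ⟪s + lam • (L v0 - dd), Δ⟫ := le_of_forall_pos_le_add h0
  have hneg : ⟪s + lam • (L v0 - dd), L v0 - L v'⟫ = -⟪s + lam • (L v0 - dd), Δ⟫ := by
    rw [hΔ, ← inner_neg_right]; congr 1; abel
  linarith [hfin, hneg.ge]

/-- Fenchel–Young equality at a subgradient. -/
lemma fconj_eq_of_subgrad' {E : Type*} [NormedAddCommGroup E] [InnerProductSpace ℝ E]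
    (φ : E → EReal) (hbot : ∀ x, φ x ≠ ⊥) (sl v0 : E) (r0 : ℝ)
    (hr0 : φ v0 = (r0 : EReal))
    (hsg : ∀ v', ((r0 + ⟪sl, v' - v0⟫ : ℝ) : EReal) ≤ φ v') :
    fconj φ sl = ((⟪sl, v0⟫ - r0 : ℝ) : EReal) := by
  apply le_antisymm
  · apply iSup_le
    intro v'
    by_cases hT : φ v' = ⊤
    · rw [hT, EReal.sub_top]
      exact bot_le
    · have hr' : φ v' = (((φ v').toReal : ℝ) : EReal) := (EReal.coe_toReal hT (hbot v')).symm
      rw [hr', ← EReal.coe_sub, EReal.coe_le_coe_iff]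
      have h := hsg v'
      rw [hr', EReal.coe_le_coe_iff] at h
      rw [inner_sub_right] at h
      linarith
  · have heq : ((⟪sl, v0⟫ - r0 : ℝ) : EReal) = ((⟪sl, v0⟫ : ℝ) : EReal) - φ v0 := by
      rw [hr0, ← EReal.coe_sub]
    rw [heq]
    exact le_iSup (fun x => ((⟪sl, x⟫ : ℝ) : EReal) - φ x) v0

/-- Lower bound for the conjugate from a single point with finite value. -/
lemma le_fconj' {E : Type*} [NormedAddCommGroup E] [InnerProductSpace ℝ E]
    (φ : E → EReal) (sl v0 : E) (r0 : ℝ) (hr0 : φ v0 = (r0 : EReal)) :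
    ((⟪sl, v0⟫ - r0 : ℝ) : EReal) ≤ fconj φ sl := by
  have heq : ((⟪sl, v0⟫ - r0 : ℝ) : EReal) = ((⟪sl, v0⟫ : ℝ) : EReal) - φ v0 := by
    rw [hr0, ← EReal.coe_sub]
  rw [heq]
  exact le_iSup (fun x => ((⟪sl, x⟫ : ℝ) : EReal) - φ x) v0


set_option maxHeartbeats 1000000 in
/-- Fejér-type inequality for the PMM iterates with respect to any
point of the extended solution set. -/
theorem pmm_fejer
    (m1 m2 n : ℕ)
    (f : EuclideanSpace ℝ (Fin m1) → EReal) (g : EuclideanSpace ℝ (Fin m2) → EReal)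
    (hf : IsPCC f) (hg : IsPCC g)
    (M : EuclideanSpace ℝ (Fin m1) →ₗ[ℝ] EuclideanSpace ℝ (Fin n))
    (C : EuclideanSpace ℝ (Fin m2) →ₗ[ℝ] EuclideanSpace ℝ (Fin n))
    (d : EuclideanSpace ℝ (Fin n))
    (lam : ℝ) (hlam : 0 < lam) (ρb : ℝ) (hρb : ρb ∈ Set.Ico (0 : ℝ) 1)
    (u : ℕ → EuclideanSpace ℝ (Fin m1)) (v : ℕ → EuclideanSpace ℝ (Fin m2))
    (z w x y : ℕ → EuclideanSpace ℝ (Fin n)) (γ ρ : ℕ → ℝ)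
    (hv : ∀ k, 1 ≤ k → ∀ v' : EuclideanSpace ℝ (Fin m2),
      g (v k) + ((⟪z (k-1) + lam • w (k-1), C (v k) - d⟫ +
          lam / 2 * ‖C (v k) - d‖ ^ 2 : ℝ) : EReal) ≤
        g v' + ((⟪z (k-1) + lam • w (k-1), C v' - d⟫ +
          lam / 2 * ‖C v' - d‖ ^ 2 : ℝ) : EReal))
    (hu : ∀ k, 1 ≤ k → ∀ u' : EuclideanSpace ℝ (Fin m1),
      f (u k) + ((⟪z (k-1) + lam • (C (v k) - d), M (u k)⟫ +
          lam / 2 * ‖M (u k)‖ ^ 2 : ℝ) : EReal) ≤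
        f u' + ((⟪z (k-1) + lam • (C (v k) - d), M u'⟫ +
          lam / 2 * ‖M u'‖ ^ 2 : ℝ) : EReal))
    (hx : ∀ k, 1 ≤ k → x k = z (k-1) + lam • w (k-1) + lam • (C (v k) - d))
    (hy : ∀ k, 1 ≤ k → y k = x k - lam • (w (k-1) - M (u k)))
    (hnz : ∀ k, 1 ≤ k → ‖M (u k) + C (v k) - d‖ + ‖M (u k) - w (k-1)‖ ≠ 0)
    (hγ : ∀ k, 1 ≤ k → γ k = (lam * ‖C (v k) - d + w (k-1)‖ ^ 2 +
        lam * ⟪d - C (v k) - M (u k), w (k-1) - M (u k)⟫) /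
      (‖M (u k) + C (v k) - d‖ ^ 2 + lam ^ 2 * ‖M (u k) - w (k-1)‖ ^ 2))
    (hρ : ∀ k, 1 ≤ k → ρ k ∈ Set.Icc (1 - ρb) (1 + ρb))
    (hz : ∀ k, 1 ≤ k → z k = z (k-1) + (ρ k * γ k) • (M (u k) + C (v k) - d))
    (hw : ∀ k, 1 ≤ k → w k = w (k-1) - (ρ k * γ k * lam) • (w (k-1) - M (u k)))
    (k : ℕ) (hk : 1 ≤ k)
    (zs ws : EuclideanSpace ℝ (Fin n))
    (hmem : (zs, ws) ∈ extSolSet f g M C d) :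
    ‖z k - zs‖ ^ 2 + ‖w k - ws‖ ^ 2 ≤
      ‖z (k-1) - zs‖ ^ 2 + ‖w (k-1) - ws‖ ^ 2 -
        ρ k * (2 - ρ k) * γ k ^ 2 *
          (‖M (u k) + C (v k) - d‖ ^ 2 + ‖lam • (w (k-1) - M (u k))‖ ^ 2) := by
  classical
  -- names
  obtain ⟨hm1, hm2⟩ := hmem
  -- ===== g side =====
  obtain ⟨rg, hrg⟩ := finite_of_min' g hg.1 hg.2.1
    (fun v' => ⟪z (k-1) + lam • w (k-1), C v' - d⟫ + lam / 2 * ‖C v' - d‖ ^ 2) (v k)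
    (fun v' => hv k hk v')
  have hsgC := subgrad_of_min' g hg.2.2.2 hg.1 C (z (k-1) + lam • w (k-1)) d lam hlam
    (v k) rg hrg (hv k hk)
  have hsgC' : ∀ v', ((rg + ⟪-(LinearMap.adjoint C (x k)), v' - v k⟫ : ℝ) : EReal) ≤ g v' := by
    intro v'
    have h := hsgC v'
    have e1 : ⟪-(LinearMap.adjoint C (x k)), v' - v k⟫ = ⟪x k, C (v k) - C v'⟫ := by
      rw [inner_neg_left, LinearMap.adjoint_inner_left, map_sub, inner_sub_right,
        inner_sub_right]
      ring
    rw [e1, hx k hk]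
    exact h
  have hfcg := fconj_eq_of_subgrad' g hg.1 (-(LinearMap.adjoint C (x k))) (v k) rg hrg hsgC'
  have h2x : hTwo g C d (x k) =
      ((⟪-(LinearMap.adjoint C (x k)), v k⟫ - rg + ⟪d, x k⟫ : ℝ) : EReal) := by
    unfold hTwo
    rw [hfcg, ← EReal.coe_add]
  have h2zs_lb : ((⟪-(LinearMap.adjoint C zs), v k⟫ - rg + ⟪d, zs⟫ : ℝ) : EReal) ≤
      hTwo g C d zs := by
    unfold hTwo
    rw [EReal.coe_add]
    exact add_le_add_left (le_fconj' g _ (v k) rg hrg) _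
  have hsub2 := hm2 (x k)
  have hzsne : hTwo g C d zs ≠ ⊤ := by
    intro h
    rw [h, EReal.top_add_coe, h2x] at hsub2
    exact (EReal.coe_ne_top _) (top_le_iff.mp hsub2)
  have hzsnb : hTwo g C d zs ≠ ⊥ := by
    intro h
    rw [h] at h2zs_lb
    exact (EReal.coe_ne_bot _) (le_bot_iff.mp h2zs_lb)
  have hρ2 : hTwo g C d zs = (((hTwo g C d zs).toReal : ℝ) : EReal) :=
    (EReal.coe_toReal hzsne hzsnb).symm
  set ρ2 : ℝ := (hTwo g C d zs).toReal with hρ2def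
  have real1 : ρ2 + ⟪ws, x k - zs⟫ ≤ ⟪-(LinearMap.adjoint C (x k)), v k⟫ - rg + ⟪d, x k⟫ := by
    rw [hρ2, h2x, ← EReal.coe_add, EReal.coe_le_coe_iff] at hsub2
    exact hsub2
  have real2 : ⟪-(LinearMap.adjoint C zs), v k⟫ - rg + ⟪d, zs⟫ ≤ ρ2 := by
    rw [hρ2, EReal.coe_le_coe_iff] at h2zs_lb
    exact h2zs_lb
  have hA' : ⟪ws, x k - zs⟫ + ⟪x k, C (v k)⟫ - ⟪zs, C (v k)⟫ - ⟪d, x k⟫ + ⟪d, zs⟫ ≤ 0 := by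
    have e1 : ⟪-(LinearMap.adjoint C (x k)), v k⟫ = -⟪x k, C (v k)⟫ := by
      rw [inner_neg_left, LinearMap.adjoint_inner_left]
    have e2 : ⟪-(LinearMap.adjoint C zs), v k⟫ = -⟪zs, C (v k)⟫ := by
      rw [inner_neg_left, LinearMap.adjoint_inner_left]
    rw [e1] at real1
    rw [e2] at real2
    linarith
  -- ===== f side =====
  obtain ⟨rf, hrf⟩ := finite_of_min' f hf.1 hf.2.1
    (fun u' => ⟪z (k-1) + lam • (C (v k) - d), M u'⟫ + lam / 2 * ‖M u'‖ ^ 2) (u k)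
    (fun u' => hu k hk u')
  have humin : ∀ u', f (u k) + ((⟪z (k-1) + lam • (C (v k) - d), M (u k) - 0⟫ +
      lam / 2 * ‖M (u k) - 0‖ ^ 2 : ℝ) : EReal) ≤
      f u' + ((⟪z (k-1) + lam • (C (v k) - d), M u' - 0⟫ +
      lam / 2 * ‖M u' - 0‖ ^ 2 : ℝ) : EReal) := by
    intro u'
    simpa [sub_zero] using hu k hk u'
  have hsgM := subgrad_of_min' f hf.2.2.2 hf.1 M (z (k-1) + lam • (C (v k) - d)) 0 lam hlam
    (u k) rf hrf humin
  have hyk : y k = z (k-1) + lam • (C (v k) - d) + lam • (M (u k) - 0) := by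
    rw [hy k hk, hx k hk]
    module
  have hsgM' : ∀ u', ((rf + ⟪-(LinearMap.adjoint M (y k)), u' - u k⟫ : ℝ) : EReal) ≤ f u' := by
    intro u'
    have h := hsgM u'
    have e1 : ⟪-(LinearMap.adjoint M (y k)), u' - u k⟫ = ⟪y k, M (u k) - M u'⟫ := by
      rw [inner_neg_left, LinearMap.adjoint_inner_left, map_sub, inner_sub_right,
        inner_sub_right]
      ring
    rw [e1, hyk]
    exact h
  have hfcf := fconj_eq_of_subgrad' f hf.1 (-(LinearMap.adjoint M (y k))) (u k) rf hrf hsgM'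
  have h1y : hOne f M (y k) = ((⟪-(LinearMap.adjoint M (y k)), u k⟫ - rf : ℝ) : EReal) := by
    unfold hOne
    rw [hfcf]
  have h1zs_lb : ((⟪-(LinearMap.adjoint M zs), u k⟫ - rf : ℝ) : EReal) ≤ hOne f M zs :=
    le_fconj' f _ (u k) rf hrf
  have hsub1 := hm1 (y k)
  have h1zsne : hOne f M zs ≠ ⊤ := by
    intro h
    rw [h, EReal.top_add_coe, h1y] at hsub1
    exact (EReal.coe_ne_top _) (top_le_iff.mp hsub1)
  have h1zsnb : hOne f M zs ≠ ⊥ := by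
    intro h
    rw [h] at h1zs_lb
    exact (EReal.coe_ne_bot _) (le_bot_iff.mp h1zs_lb)
  have hρ1 : hOne f M zs = (((hOne f M zs).toReal : ℝ) : EReal) :=
    (EReal.coe_toReal h1zsne h1zsnb).symm
  set ρ1 : ℝ := (hOne f M zs).toReal with hρ1def
  have real1' : ρ1 + ⟪-ws, y k - zs⟫ ≤ ⟪-(LinearMap.adjoint M (y k)), u k⟫ - rf := by
    rw [hρ1, h1y, ← EReal.coe_add, EReal.coe_le_coe_iff] at hsub1
    exact hsub1
  have real2' : ⟪-(LinearMap.adjoint M zs), u k⟫ - rf ≤ ρ1 := by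
    rw [hρ1, EReal.coe_le_coe_iff] at h1zs_lb
    exact h1zs_lb
  have hB' : ⟪-ws, y k - zs⟫ + ⟪y k, M (u k)⟫ - ⟪zs, M (u k)⟫ ≤ 0 := by
    have e1 : ⟪-(LinearMap.adjoint M (y k)), u k⟫ = -⟪y k, M (u k)⟫ := by
      rw [inner_neg_left, LinearMap.adjoint_inner_left]
    have e2 : ⟪-(LinearMap.adjoint M zs), u k⟫ = -⟪zs, M (u k)⟫ := by
      rw [inner_neg_left, LinearMap.adjoint_inner_left]
    rw [e1] at real1'
    rw [e2] at real2'
    linarith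
  -- ===== algebra =====
  have hid : ⟪z (k-1) - zs, M (u k) + C (v k) - d⟫ -
      lam * ⟪w (k-1) - ws, w (k-1) - M (u k)⟫ +
      (lam * ‖C (v k) - d + w (k-1)‖ ^ 2 +
        lam * ⟪d - C (v k) - M (u k), w (k-1) - M (u k)⟫) =
      (⟪ws, x k - zs⟫ + ⟪x k, C (v k)⟫ - ⟪zs, C (v k)⟫ - ⟪d, x k⟫ + ⟪d, zs⟫) +
      (⟪-ws, y k - zs⟫ + ⟪y k, M (u k)⟫ - ⟪zs, M (u k)⟫) := by
    rw [hy k hk, hx k hk]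
    simp only [← real_inner_self_eq_norm_sq]
    simp only [inner_add_left, inner_add_right, inner_sub_left, inner_sub_right,
      inner_neg_left, inner_neg_right, real_inner_smul_left, real_inner_smul_right]
    simp only [real_inner_comm]
    ring
  have hQle : ⟪z (k-1) - zs, M (u k) + C (v k) - d⟫ -
      lam * ⟪w (k-1) - ws, w (k-1) - M (u k)⟫ +
      (lam * ‖C (v k) - d + w (k-1)‖ ^ 2 +
        lam * ⟪d - C (v k) - M (u k), w (k-1) - M (u k)⟫) ≤ 0 := by
    rw [hid]
    linarith
  have hnB : ‖M (u k) - w (k-1)‖ = ‖w (k-1) - M (u k)‖ := norm_sub_rev _ _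
  have hS : 0 < ‖M (u k) + C (v k) - d‖ ^ 2 + lam ^ 2 * ‖w (k-1) - M (u k)‖ ^ 2 := by
    have h := hnz k hk
    rw [hnB] at h
    have h1 : 0 < ‖M (u k) + C (v k) - d‖ ∨ 0 < ‖w (k-1) - M (u k)‖ := by
      by_contra hc
      push_neg at hc
      have e1 : ‖M (u k) + C (v k) - d‖ = 0 := le_antisymm hc.1 (norm_nonneg _)
      have e2 : ‖w (k-1) - M (u k)‖ = 0 := le_antisymm hc.2 (norm_nonneg _)
      rw [e1, e2] at h
      simp at h
    rcases h1 with h1 | h1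
    · nlinarith [pow_pos h1 2, mul_nonneg (sq_nonneg lam) (sq_nonneg ‖w (k-1) - M (u k)‖)]
    · nlinarith [mul_pos (pow_pos hlam 2) (pow_pos h1 2),
        sq_nonneg ‖M (u k) + C (v k) - d‖]
  have hγS : γ k * (‖M (u k) + C (v k) - d‖ ^ 2 + lam ^ 2 * ‖w (k-1) - M (u k)‖ ^ 2) =
      lam * ‖C (v k) - d + w (k-1)‖ ^ 2 +
        lam * ⟪d - C (v k) - M (u k), w (k-1) - M (u k)⟫ := by
    rw [hγ k hk, hnB]
    exact div_mul_cancel₀ _ hS.ne'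
  have hN2 : 2 * (lam * ‖C (v k) - d + w (k-1)‖ ^ 2 +
      lam * ⟪d - C (v k) - M (u k), w (k-1) - M (u k)⟫) =
      lam * (‖M (u k) + C (v k) - d‖ ^ 2 + ‖w (k-1) - M (u k)‖ ^ 2 +
        ‖C (v k) - d + w (k-1)‖ ^ 2) := by
    simp only [← real_inner_self_eq_norm_sq]
    simp only [inner_add_left, inner_add_right, inner_sub_left, inner_sub_right,
      real_inner_smul_left, real_inner_smul_right]
    simp only [real_inner_comm]
    ring
  have hN0 : 0 ≤ lam * ‖C (v k) - d + w (k-1)‖ ^ 2 +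
      lam * ⟪d - C (v k) - M (u k), w (k-1) - M (u k)⟫ := by
    have hpos : 0 ≤ lam * (‖M (u k) + C (v k) - d‖ ^ 2 + ‖w (k-1) - M (u k)‖ ^ 2 +
        ‖C (v k) - d + w (k-1)‖ ^ 2) := by positivity
    linarith
  have hγ0 : 0 ≤ γ k := by
    rw [hγ k hk, hnB]
    exact div_nonneg hN0 hS.le
  have hρpos : 0 < ρ k := by
    have h := (hρ k hk).1
    have := hρb.2
    linarith
  -- expand the update formulas
  have e1 : z k - zs = (z (k-1) - zs) + (ρ k * γ k) • (M (u k) + C (v k) - d) := by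
    rw [hz k hk]
    abel
  have e2 : w k - ws = (w (k-1) - ws) - (ρ k * γ k) • (lam • (w (k-1) - M (u k))) := by
    rw [hw k hk]
    module
  have n1 : ‖z k - zs‖ ^ 2 = ‖z (k-1) - zs‖ ^ 2 +
      2 * ((ρ k * γ k) * ⟪z (k-1) - zs, M (u k) + C (v k) - d⟫) +
      (ρ k * γ k) ^ 2 * ‖M (u k) + C (v k) - d‖ ^ 2 := by
    rw [e1, @norm_add_sq_real, real_inner_smul_right, norm_smul, Real.norm_eq_abs,
      mul_pow, sq_abs]
  have n2 : ‖w k - ws‖ ^ 2 = ‖w (k-1) - ws‖ ^ 2 -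
      2 * ((ρ k * γ k) * (lam * ⟪w (k-1) - ws, w (k-1) - M (u k)⟫)) +
      (ρ k * γ k) ^ 2 * (lam ^ 2 * ‖w (k-1) - M (u k)‖ ^ 2) := by
    rw [e2, @norm_sub_sq_real, real_inner_smul_right, real_inner_smul_right, norm_smul,
      norm_smul, Real.norm_eq_abs, Real.norm_eq_abs, mul_pow, mul_pow, sq_abs, sq_abs]
  have nlB : ‖lam • (w (k-1) - M (u k))‖ ^ 2 = lam ^ 2 * ‖w (k-1) - M (u k)‖ ^ 2 := by
    rw [norm_smul, Real.norm_eq_abs, mul_pow, sq_abs]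
  rw [n1, n2, nlB]
  set X : ℝ := ⟪z (k-1) - zs, M (u k) + C (v k) - d⟫ -
    lam * ⟪w (k-1) - ws, w (k-1) - M (u k)⟫ with hX
  set N : ℝ := lam * ‖C (v k) - d + w (k-1)‖ ^ 2 +
    lam * ⟪d - C (v k) - M (u k), w (k-1) - M (u k)⟫ with hN
  set S : ℝ := ‖M (u k) + C (v k) - d‖ ^ 2 + lam ^ 2 * ‖w (k-1) - M (u k)‖ ^ 2 with hSdef
  have h5 : γ k * (X + N) ≤ 0 := mul_nonpos_iff.mpr (Or.inl ⟨hγ0, hQle⟩)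
  have h3 : ρ k * (γ k * (X + N)) ≤ 0 := mul_nonpos_iff.mpr (Or.inl ⟨hρpos.le, h5⟩)
  have h4 : ρ k * (γ k * N - γ k ^ 2 * S) = 0 := by
    have h6 : γ k * N - γ k ^ 2 * S = 0 := by
      rw [← hγS]
      ring
    rw [h6, mul_zero]
  simp only [hX, hN, hSdef] at h3 h4 ⊢
  linarith [h3, h4]
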